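/- Semiconcavity of the distance function: let E ⊂ ℝ^N be a nonempty closed set, δ > 0, and x ∈ ℝ^N with dist(x, E) ≥ δ. Then there is a universal constant c such that for all h ∈ ℝ^N with |h| ≤ δ/2, dist(x+h, E) − 2 dist(x, E) + dist(x−h, E) ≤ (c/δ)|h|². -/

import Mathlib

open Metric

theorem stmt5 :
    ∃ c : ℝ, 0 < c ∧
      ∀ (N : ℕ) (E : Set (EuclideanSpace ℝ (Fin N))), E.Nonempty → IsClosed E →
        ∀ δ : ℝ, 0 < δ → ∀ x : EuclideanSpace ℝ (Fin N), δ ≤ infDist x E →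
          ∀ h : EuclideanSpace ℝ (Fin N), ‖h‖ ≤ δ / 2 →
            infDist (x + h) E - 2 * infDist x E + infDist (x - h) E ≤ (c / δ) * ‖h‖ ^ 2 := by
  refine ⟨1, one_pos, fun N E hNe hE δ hδ x hxd h hh => ?_⟩
  obtain ⟨y, hyE, hyd⟩ := hE.exists_infDist_eq_dist hNe x
  have h1 : infDist (x + h) E ≤ ‖(x - y) + h‖ := by
    have := infDist_le_dist_of_mem (x := x + h) hyE
    rw [dist_eq_norm] at this
    convert this using 2
    · rfl
    abel
  have h2 : infDist (x - h) E ≤ ‖(x - y) - h‖ := by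
    have := infDist_le_dist_of_mem (x := x - h) hyE
    rw [dist_eq_norm] at this
    convert this using 2
    · rfl
    abel
  set v := x - y
  have hd : infDist x E = ‖v‖ := by rw [hyd, dist_eq_norm]
  set a := ‖v + h‖
  set b := ‖v - h‖
  set d := ‖v‖
  set s := ‖h‖
  have hpar : a ^ 2 + b ^ 2 = 2 * d ^ 2 + 2 * s ^ 2 := by
    have e1 : a ^ 2 = d ^ 2 + 2 * inner ℝ v h + s ^ 2 := norm_add_pow_two_real v h
    have e2 : b ^ 2 = d ^ 2 - 2 * inner ℝ v h + s ^ 2 := norm_sub_pow_two_real v h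
    linarith
  have ha : 0 ≤ a := norm_nonneg _
  have hb : 0 ≤ b := norm_nonneg _
  have hs : 0 ≤ s := norm_nonneg _
  have hdδ : δ ≤ d := by rw [← hd]; exact hxd
  have key : a + b ≤ 2 * d + s ^ 2 / δ := by
    have hr : 0 ≤ 2 * d + s ^ 2 / δ := by positivity
    have ht0 : 0 ≤ s ^ 2 / δ := by positivity
    have htδ : δ * (s ^ 2 / δ) = s ^ 2 := by field_simp
    have hsq : (a + b) ^ 2 ≤ (2 * d + s ^ 2 / δ) ^ 2 := by
      nlinarith [sq_nonneg (a - b), mul_nonneg ht0 (sub_nonneg.mpr hdδ),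
        sq_nonneg (s ^ 2 / δ)]
    exact (pow_le_pow_iff_left₀ (by positivity) hr two_ne_zero).mp hsq
  have : infDist (x + h) E - 2 * infDist x E + infDist (x - h) E ≤ a + b - 2 * d := by
    rw [hd]; linarith
  calc infDist (x + h) E - 2 * infDist x E + infDist (x - h) E ≤ a + b - 2 * d := this
    _ ≤ s ^ 2 / δ := by linarith
    _ = (1 / δ) * s ^ 2 := by ring
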